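/- arXiv:math/0508584 — 3 statements merged into one kernel-verified Lean document; each statement's English description precedes it below -/
import Mathlib

section
/- For the 6-dimensional Lie algebra L_{6,4} with nonzero brackets [X_1,X_2]=2X_2, [X_1,X_3]=-2X_3, [X_2,X_3]=X_1, [X_1,X_4]=2X_4, [X_1,X_6]=-2X_6, [X_2,X_5]=2X_4, [X_2,X_6]=X_5, [X_3,X_4]=X_5, [X_3,X_5]=2X_6, the polynomials I_1 = x_5^2 - 4 x_4 x_6 and I_2 = x_1 x_5 + 2 x_2 x_6 - 2 x_3 x_4 are annihilated by all coadjoint vector fields X̂_i = C_{ij}^k x_k ∂/∂x_j, i = 1,…,6. -/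
open scoped BigOperators

lemma proj_hd (x : Fin 6 → ℝ) (i : Fin 6) :
    HasFDerivAt (fun y : Fin 6 → ℝ => y i) (ContinuousLinearMap.proj i : (Fin 6 → ℝ) →L[ℝ] ℝ) x :=
  (ContinuousLinearMap.proj i : (Fin 6 → ℝ) →L[ℝ] ℝ).hasFDerivAt

lemma d1 (x v : Fin 6 → ℝ) :
    fderiv ℝ (fun y : Fin 6 → ℝ => (y 4)^2 - 4 * y 3 * y 5) x v
      = 2 * x 4 * v 4 - 4 * (v 3 * x 5 + x 3 * v 5) := by
  have he : (fun y : Fin 6 → ℝ => (y 4)^2 - 4 * y 3 * y 5)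
      = fun y => y 4 * y 4 - 4 * y 3 * y 5 := by funext y; ring
  have h := ((proj_hd x 4).mul (proj_hd x 4)).sub (((proj_hd x 3).const_mul (4:ℝ)).mul (proj_hd x 5))
  have h' : HasFDerivAt (fun y : Fin 6 → ℝ => y 4 * y 4 - 4 * y 3 * y 5) _ x := h
  rw [he, h'.fderiv]
  simp [ContinuousLinearMap.proj]
  ring

lemma d2 (x v : Fin 6 → ℝ) :
    fderiv ℝ (fun y : Fin 6 → ℝ => y 0 * y 4 + 2 * y 1 * y 5 - 2 * y 2 * y 3) x v
      = (v 0 * x 4 + x 0 * v 4) + 2 * (v 1 * x 5 + x 1 * v 5) - 2 * (v 2 * x 3 + x 2 * v 3) := by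
  have h := (((proj_hd x 0).mul (proj_hd x 4)).add (((proj_hd x 1).const_mul (2:ℝ)).mul (proj_hd x 5))).sub (((proj_hd x 2).const_mul (2:ℝ)).mul (proj_hd x 3))
  have h' : HasFDerivAt (fun y : Fin 6 → ℝ => y 0 * y 4 + 2 * y 1 * y 5 - 2 * y 2 * y 3) _ x := h
  rw [h'.fderiv]
  simp [ContinuousLinearMap.proj]
  ring


open scoped BigOperators

noncomputable def Xhat {n : ℕ} (C : Fin n → Fin n → Fin n → ℝ)
    (F : (Fin n → ℝ) → ℝ) (i : Fin n) (x : Fin n → ℝ) : ℝ :=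
  ∑ j, ∑ k, C i j k * x k * fderiv ℝ F x (Pi.single j 1)

def C64 : Fin 6 → Fin 6 → Fin 6 → ℝ := fun i j k =>
  match i.1, j.1, k.1 with
  | 0, 1, 1 => 2
  | 1, 0, 1 => -2
  | 0, 2, 2 => -2
  | 2, 0, 2 => 2
  | 1, 2, 0 => 1
  | 2, 1, 0 => -1
  | 0, 3, 3 => 2
  | 3, 0, 3 => -2
  | 0, 5, 5 => -2
  | 5, 0, 5 => 2
  | 1, 4, 3 => 2
  | 4, 1, 3 => -2
  | 1, 5, 4 => 1
  | 5, 1, 4 => -1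
  | 2, 3, 4 => 1
  | 3, 2, 4 => -1
  | 2, 4, 5 => 2
  | 4, 2, 5 => -2
  | _, _, _ => 0

set_option maxHeartbeats 1000000 in
theorem L64_invariants :
    ∀ (i : Fin 6) (x : Fin 6 → ℝ),
      Xhat C64 (fun y => (y 4)^2 - 4 * y 3 * y 5) i x = 0 ∧
      Xhat C64 (fun y => y 0 * y 4 + 2 * y 1 * y 5 - 2 * y 2 * y 3) i x = 0 := by
  intro i x
  constructor <;> fin_cases i <;>
    · simp only [Xhat, Fin.sum_univ_six, d1, d2]
      norm_num [C64, Pi.single_apply, Fin.ext_iff,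
        show ((0:Fin 6):ℕ) = 0 from rfl, show ((1:Fin 6):ℕ) = 1 from rfl,
        show ((2:Fin 6):ℕ) = 2 from rfl, show ((3:Fin 6):ℕ) = 3 from rfl,
        show ((4:Fin 6):ℕ) = 4 from rfl, show ((5:Fin 6):ℕ) = 5 from rfl]
      try ring
end

section
/- For the 8-dimensional Lie algebra L_{8,1}^p (p ≠ 0) obtained from L_{6,1} ⊕ ℝX_7 by adjoining X_8 with [X_j,X_8]=X_j for j=4,5,6 and [X_7,X_8]=pX_7 (and all other brackets as in L_{6,1}: [X_2,X_3]=X_1, [X_1,X_2]=X_3, [X_1,X_3]=-X_2, [X_1,X_5]=X_6, [X_1,X_6]=-X_5, [X_2,X_4]=-X_6, [X_2,X_6]=X_4, [X_3,X_4]=X_5, [X_3,X_5]=-X_4), the rational functions J_1 = (x_4^2+x_5^2+x_6^2)^p / x_7^2 and J_2 = (x_1x_4+x_2x_5+x_3x_6)^p / x_7 are, on the open set where x_7 > 0 and x_4^2+x_5^2+x_6^2 > 0 and x_1x_4+x_2x_5+x_3x_6 > 0, annihilated by all coadjoint vector fields X̂_i = C_{ij}^k x_k ∂/∂x_j, i =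 1,…,8. -/
open scoped BigOperators

noncomputable def C81 (p : ℝ) : Fin 8 → Fin 8 → Fin 8 → ℝ := fun i j k =>
  match i.1, j.1, k.1 with
  | 1, 2, 0 => 1
  | 2, 1, 0 => -1
  | 0, 1, 2 => 1
  | 1, 0, 2 => -1
  | 0, 2, 1 => -1
  | 2, 0, 1 => 1
  | 0, 4, 5 => 1
  | 4, 0, 5 => -1
  | 0, 5, 4 => -1
  | 5, 0, 4 => 1
  | 1, 3, 5 => -1
  | 3, 1, 5 => 1
  | 1, 5, 3 => 1
  | 5, 1, 3 => -1
  | 2, 3, 4 => 1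
  | 3, 2, 4 => -1
  | 2, 4, 3 => -1
  | 4, 2, 3 => 1
  | 3, 7, 3 => 1
  | 7, 3, 3 => -1
  | 4, 7, 4 => 1
  | 7, 4, 4 => -1
  | 5, 7, 5 => 1
  | 7, 5, 5 => -1
  | 6, 7, 6 => p
  | 7, 6, 6 => -p
  | _, _, _ => 0


def pr (i : Fin 8) : (Fin 8 → ℝ) →L[ℝ] ℝ := ContinuousLinearMap.proj i

lemma hpr (i : Fin 8) (x : Fin 8 → ℝ) :
    HasFDerivAt (fun y : Fin 8 → ℝ => y i) (pr i) x := (pr i).hasFDerivAt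

lemma fd1 (p : ℝ) (x : Fin 8 → ℝ) (h6 : x 6 ≠ 0)
    (hg : (x 3)^2 + (x 4)^2 + (x 5)^2 ≠ 0) (v : Fin 8 → ℝ) :
    fderiv ℝ (fun y : Fin 8 → ℝ => ((y 3)^2 + (y 4)^2 + (y 5)^2) ^ p / (y 6)^2) x v
    = ((p * ((x 3)^2 + (x 4)^2 + (x 5)^2) ^ (p - 1) *
        (2 * x 3 * v 3 + 2 * x 4 * v 4 + 2 * x 5 * v 5)) * (x 6)^2
      - ((x 3)^2 + (x 4)^2 + (x 5)^2) ^ p * (2 * x 6 * v 6)) / ((x 6)^2)^2 := by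
  have hfun : (fun y : Fin 8 → ℝ => ((y 3)^2 + (y 4)^2 + (y 5)^2) ^ p / (y 6)^2)
      = (fun y : Fin 8 → ℝ => (y 3 * y 3 + y 4 * y 4 + y 5 * y 5) ^ p * ((y 6 * y 6))⁻¹) := by
    funext y; rw [div_eq_mul_inv]; ring_nf
  rw [hfun]
  simp only [pow_two] at hg ⊢
  have hgd := (((hpr 3 x).mul (hpr 3 x)).add ((hpr 4 x).mul (hpr 4 x))).add
    ((hpr 5 x).mul (hpr 5 x))
  have hr := hgd.rpow_const (p := p) (Or.inl hg)
  have h66 := (hpr 6 x).mul (hpr 6 x)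
  have hinv := (hasFDerivAt_inv' (𝕜 := ℝ) (mul_ne_zero h6 h6)).comp x h66
  simp only [Function.comp_def] at hinv
  have hdiv := hr.mul hinv
  rw [HasFDerivAt.fderiv
    (f := fun y : Fin 8 → ℝ => (y 3 * y 3 + y 4 * y 4 + y 5 * y 5) ^ p * ((y 6 * y 6))⁻¹) hdiv]
  simp [pr, ContinuousLinearMap.mulLeftRight]
  field_simp
  ring

lemma fd2 (p : ℝ) (x : Fin 8 → ℝ) (h6 : x 6 ≠ 0)
    (hs : x 0 * x 3 + x 1 * x 4 + x 2 * x 5 ≠ 0) (v : Fin 8 → ℝ) :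
    fderiv ℝ (fun y : Fin 8 → ℝ => (y 0 * y 3 + y 1 * y 4 + y 2 * y 5) ^ p / y 6) x v
    = ((p * (x 0 * x 3 + x 1 * x 4 + x 2 * x 5) ^ (p - 1) *
        (v 0 * x 3 + x 0 * v 3 + v 1 * x 4 + x 1 * v 4 + v 2 * x 5 + x 2 * v 5)) * x 6
      - (x 0 * x 3 + x 1 * x 4 + x 2 * x 5) ^ p * v 6) / (x 6)^2 := by
  have hfun : (fun y : Fin 8 → ℝ => (y 0 * y 3 + y 1 * y 4 + y 2 * y 5) ^ p / y 6)
      = (fun y : Fin 8 → ℝ => (y 0 * y 3 + y 1 * y 4 + y 2 * y 5) ^ p * (y 6)⁻¹) := by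
    funext y; rw [div_eq_mul_inv]
  rw [hfun]
  have hsd := (((hpr 0 x).mul (hpr 3 x)).add ((hpr 1 x).mul (hpr 4 x))).add
    ((hpr 2 x).mul (hpr 5 x))
  have hr := hsd.rpow_const (p := p) (Or.inl hs)
  have hinv := (hasFDerivAt_inv' (𝕜 := ℝ) h6).comp x (hpr 6 x)
  simp only [Function.comp_def] at hinv
  have hdiv := hr.mul hinv
  rw [HasFDerivAt.fderiv
    (f := fun y : Fin 8 → ℝ => (y 0 * y 3 + y 1 * y 4 + y 2 * y 5) ^ p * (y 6)⁻¹) hdiv]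
  simp [pr, ContinuousLinearMap.mulLeftRight]
  field_simp
  ring

set_option maxHeartbeats 20000000 in
theorem L81_rational_invariants (p : ℝ) (hp : p ≠ 0) :
    ∀ (i : Fin 8) (x : Fin 8 → ℝ),
      x 6 > 0 → (x 3)^2 + (x 4)^2 + (x 5)^2 > 0 →
      x 0 * x 3 + x 1 * x 4 + x 2 * x 5 > 0 →
      Xhat (C81 p) (fun y => ((y 3)^2 + (y 4)^2 + (y 5)^2) ^ p / (y 6)^2) i x = 0 ∧
      Xhat (C81 p) (fun y => (y 0 * y 3 + y 1 * y 4 + y 2 * y 5) ^ p / y 6) i x = 0 := by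
  intro i x h6 hg hs
  have h6' : x 6 ≠ 0 := ne_of_gt h6
  have hg' : (x 3)^2 + (x 4)^2 + (x 5)^2 ≠ 0 := ne_of_gt hg
  have hs' : x 0 * x 3 + x 1 * x 4 + x 2 * x 5 ≠ 0 := ne_of_gt hs
  have hs2 : x 3 * x 0 + x 1 * x 4 + x 2 * x 5 ≠ 0 := by rwa [mul_comm (x 3) (x 0)]
  have eg : ((x 3)^2 + (x 4)^2 + (x 5)^2) ^ (p - 1)
      = ((x 3)^2 + (x 4)^2 + (x 5)^2) ^ p / ((x 3)^2 + (x 4)^2 + (x 5)^2) := by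
    rw [Real.rpow_sub hg, Real.rpow_one]
  have es : (x 0 * x 3 + x 1 * x 4 + x 2 * x 5) ^ (p - 1)
      = (x 0 * x 3 + x 1 * x 4 + x 2 * x 5) ^ p / (x 0 * x 3 + x 1 * x 4 + x 2 * x 5) := by
    rw [Real.rpow_sub hs, Real.rpow_one]
  constructor <;>
  unfold Xhat <;>
  fin_cases i <;>
  simp only [Fin.sum_univ_eight] <;>
  simp [C81] <;>
  simp only [fd1 p x h6' hg', fd2 p x h6' hs'] <;>
  simp [Pi.single_apply, eg, es] <;>
  (try field_simp) <;>
  (try ring)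
end

section
/- For the 7-dimensional Lie algebra L_{7,1} with nonzero brackets [X_2,X_3]=X_1, [X_1,X_2]=X_3, [X_1,X_3]=-X_2, [X_1,X_5]=X_6, [X_1,X_6]=-X_5, [X_2,X_4]=-X_6, [X_2,X_6]=X_4, [X_3,X_4]=X_5, [X_3,X_5]=-X_4, [X_j,X_7]=X_j for j=4,5,6, the rational function I_1 = (x_4^2+x_5^2+x_6^2)(x_1x_4+x_2x_5+x_3x_6)^{-2}, defined on the open set where x_1x_4+x_2x_5+x_3x_6 ≠ 0, is annihilated by all coadjoint vector fields X̂_i = C_{ij}^k x_k ∂/∂x_j, i = 1,…,7. -/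
open scoped BigOperators

open ContinuousLinearMap in
lemma fderiv_F7 (x : Fin 7 → ℝ) (h : x 0 * x 3 + x 1 * x 4 + x 2 * x 5 ≠ 0) (v : Fin 7 → ℝ) :
    fderiv ℝ (fun y : Fin 7 → ℝ => ((y 3)^2 + (y 4)^2 + (y 5)^2)
        / (y 0 * y 3 + y 1 * y 4 + y 2 * y 5)^2) x v
    = ((2*x 3*v 3 + 2*x 4*v 4 + 2*x 5*v 5) * (x 0*x 3+x 1*x 4+x 2*x 5)^2
       - ((x 3)^2+(x 4)^2+(x 5)^2) * (2*(x 0*x 3+x 1*x 4+x 2*x 5)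
          *(v 0*x 3+x 0*v 3+v 1*x 4+x 1*v 4+v 2*x 5+x 2*v 5)))
      / ((x 0*x 3+x 1*x 4+x 2*x 5)^2)^2 := by
  have hp : ∀ m : Fin 7, HasFDerivAt (fun y : Fin 7 → ℝ => y m)
      (proj m : (Fin 7 → ℝ) →L[ℝ] ℝ) x := fun m => hasFDerivAt_apply m x
  have sq : ∀ m : Fin 7, HasFDerivAt (fun y : Fin 7 → ℝ => (y m)^2)
      (x m • (proj m : (Fin 7 → ℝ) →L[ℝ] ℝ) + x m • (proj m : (Fin 7 → ℝ) →L[ℝ] ℝ)) x := by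
    intro m
    simpa only [pow_two, Pi.mul_def] using (hp m).mul (hp m)
  have hN := ((sq 3).add (sq 4)).add (sq 5)
  have hD := ((((hp 0).mul (hp 3)).add ((hp 1).mul (hp 4))).add ((hp 2).mul (hp 5)))
  have hD2 := hD.mul hD
  have h2 : (x 0 * x 3 + x 1 * x 4 + x 2 * x 5) * (x 0 * x 3 + x 1 * x 4 + x 2 * x 5) ≠ 0 :=
    mul_ne_zero h h
  have hinv := (hasFDerivAt_inv h2).comp x hD2
  have hF := hN.mul hinv
  rw [show (fun y : Fin 7 → ℝ => ((y 3)^2 + (y 4)^2 + (y 5)^2)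
        / (y 0 * y 3 + y 1 * y 4 + y 2 * y 5)^2)
      = (fun y : Fin 7 → ℝ => ((y 3)^2 + (y 4)^2 + (y 5)^2)
        * ((y 0 * y 3 + y 1 * y 4 + y 2 * y 5) * (y 0 * y 3 + y 1 * y 4 + y 2 * y 5))⁻¹)
      from funext fun y => by rw [div_eq_mul_inv]; ring_nf]
  simp only [Function.comp_def, Pi.mul_def, Pi.add_def] at hF
  rw [hF.fderiv]
  simp only [ContinuousLinearMap.add_apply, ContinuousLinearMap.smul_apply,
    ContinuousLinearMap.coe_comp', Function.comp_apply, ContinuousLinearMap.smulRight_apply,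
    ContinuousLinearMap.one_apply, ContinuousLinearMap.proj_apply, smul_eq_mul,
    ContinuousLinearMap.toSpanSingleton_apply]
  field_simp
  ring

def C71 : Fin 7 → Fin 7 → Fin 7 → ℝ := fun i j k =>
  match i.1, j.1, k.1 with
  | 1, 2, 0 => 1
  | 2, 1, 0 => -1
  | 0, 1, 2 => 1
  | 1, 0, 2 => -1
  | 0, 2, 1 => -1
  | 2, 0, 1 => 1
  | 0, 4, 5 => 1
  | 4, 0, 5 => -1
  | 0, 5, 4 => -1
  | 5, 0, 4 => 1
  | 1, 3, 5 => -1
  | 3, 1, 5 => 1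
  | 1, 5, 3 => 1
  | 5, 1, 3 => -1
  | 2, 3, 4 => 1
  | 3, 2, 4 => -1
  | 2, 4, 3 => -1
  | 4, 2, 3 => 1
  | 3, 6, 3 => 1
  | 6, 3, 3 => -1
  | 4, 6, 4 => 1
  | 6, 4, 4 => -1
  | 5, 6, 5 => 1
  | 6, 5, 5 => -1
  | _, _, _ => 0

set_option maxHeartbeats 1000000 in
theorem L71_invariant :
    ∀ (i : Fin 7) (x : Fin 7 → ℝ),
      x 0 * x 3 + x 1 * x 4 + x 2 * x 5 ≠ 0 →
      Xhat C71 (fun y => ((y 3)^2 + (y 4)^2 + (y 5)^2)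
        / (y 0 * y 3 + y 1 * y 4 + y 2 * y 5)^2) i x = 0 := by
  intro i x h
  unfold Xhat
  simp only [Fin.sum_univ_seven]
  fin_cases i <;>
    ( simp only [C71]
      norm_num
      simp only [fderiv_F7 x h, Pi.single_apply]
      simp +decide
      field_simp
      ring )
end
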